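/- (VectorAdam is rotation equivariant over any number of steps.) Let n ≥ 1, let f : ℝⁿ → ℝ be differentiable and rotation invariant, and fix α > 0, β₁, β₂ ∈ [0,1), ε > 0. For each timestep t ≥ 1, let S_t denote the VectorAdam step on (θ, m, v): g = ∇f(θ); m ← β₁m + (1−β₁)g; v ← β₂v + (1−β₂)‖g‖²₂; θ ← θ − α·(m/(1−β₁ᵗ))/(√(v/(1−β₂ᵗ)) + ε). Starting from initial state (θ₀, 0, 0), let (θ_T, m_T, v_T) be the state after applying S₁, S₂, …, S_T in order; and for a rotation R ∈ SO(n) let (θ'_T, m'_T, v'_T) be the state after applying the same T steps starting from (Rθ₀, 0, 0). Then for every T ≥ 0, θ'_T = Rθ_T, m'_T = Rm_T, and v'_T = v_T. -/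
import Mathlib


/-- One VectorAdam step on the state `(θ, m, v)` at timestep `t`:
`g = ∇f(θ)`, `m* = β₁m + (1−β₁)g`, `v* = β₂v + (1−β₂)‖g‖²`,
`m̂ = m*/(1−β₁ᵗ)`, `v̂ = v*/(1−β₂ᵗ)`, `θ* = θ − α·m̂/(√v̂ + ε)`. -/
noncomputable def vectorAdamStep (n : ℕ) (f : EuclideanSpace ℝ (Fin n) → ℝ)
    (α β₁ β₂ ε : ℝ) (t : ℕ)
    (s : EuclideanSpace ℝ (Fin n) × EuclideanSpace ℝ (Fin n) × ℝ) :
    EuclideanSpace ℝ (Fin n) × EuclideanSpace ℝ (Fin n) × ℝ :=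
  let g := gradient f s.1
  let mStar := β₁ • s.2.1 + (1 - β₁) • g
  let vStar := β₂ * s.2.2 + (1 - β₂) * ‖g‖ ^ 2
  let mHat := (1 - β₁ ^ t)⁻¹ • mStar
  let vHat := vStar / (1 - β₂ ^ t)
  (s.1 - (α / (Real.sqrt vHat + ε)) • mHat, mStar, vStar)

/-- The VectorAdam state after `T` steps `S₁, S₂, …, S_T`, starting from the
zero-initialized moments state `(θ₀, 0, 0)`. -/
noncomputable def vectorAdamIter (n : ℕ) (f : EuclideanSpace ℝ (Fin n) → ℝ)
    (α β₁ β₂ ε : ℝ) (θ₀ : EuclideanSpace ℝ (Fin n)) :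
    ℕ → EuclideanSpace ℝ (Fin n) × EuclideanSpace ℝ (Fin n) × ℝ
  | 0 => (θ₀, 0, 0)
  | T + 1 => vectorAdamStep n f α β₁ β₂ ε (T + 1) (vectorAdamIter n f α β₁ β₂ ε θ₀ T)

open RealInnerProductSpace in
lemma gradient_rot {E : Type*} [NormedAddCommGroup E] [InnerProductSpace ℝ E]
    [CompleteSpace E]
    (f : E → ℝ) (hf : Differentiable ℝ f) (R : E ≃ₗᵢ[ℝ] E)
    (hfR : ∀ x, f (R x) = f x) (x : E) :
    gradient f (R x) = R (gradient f x) := by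
  apply ext_inner_right ℝ
  intro y
  have h1 : ∀ (z : E) (L : E →L[ℝ] ℝ),
      ⟪((InnerProductSpace.toDual ℝ E).symm L : E), z⟫ = L z := by
    intro z L
    rw [← InnerProductSpace.toDual_apply_apply, LinearIsometryEquiv.apply_symm_apply]
  have hfun : f ∘ R = f := funext hfR
  have hcomp : fderiv ℝ f x = (fderiv ℝ f (R x)).comp (R : E →L[ℝ] E) := by
    conv_lhs => rw [← hfun]
    rw [fderiv_comp x (hf (R x)) (R.toContinuousLinearEquiv.differentiableAt)]
    congr 1
    exact R.toContinuousLinearEquiv.fderiv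
  calc ⟪gradient f (R x), y⟫ = fderiv ℝ f (R x) y := h1 y _
    _ = fderiv ℝ f x (R.symm y) := by
        rw [hcomp]; simp
    _ = ⟪gradient f x, R.symm y⟫ := (h1 _ _).symm
    _ = ⟪R (gradient f x), y⟫ := by
        rw [← R.inner_map_map]; simp

/-- VectorAdam is rotation equivariant over any number of steps: starting from
`(Rθ₀, 0, 0)` instead of `(θ₀, 0, 0)`, after `T` steps the parameter and first
moment are rotated by `R`, and the second moment is unchanged. -/
theorem vectorAdam_rotation_equivariant
    (n : ℕ) (hn : 1 ≤ n)
    (f : EuclideanSpace ℝ (Fin n) → ℝ) (hf : Differentiable ℝ f)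
    (hinv : ∀ (R : EuclideanSpace ℝ (Fin n) ≃ₗᵢ[ℝ] EuclideanSpace ℝ (Fin n)),
      LinearMap.det R.toLinearEquiv.toLinearMap = 1 →
      ∀ x : EuclideanSpace ℝ (Fin n), f (R x) = f x)
    (α β₁ β₂ ε : ℝ) (hα : 0 < α)
    (hβ₁ : β₁ ∈ Set.Ico (0 : ℝ) 1) (hβ₂ : β₂ ∈ Set.Ico (0 : ℝ) 1) (hε : 0 < ε)
    (R : EuclideanSpace ℝ (Fin n) ≃ₗᵢ[ℝ] EuclideanSpace ℝ (Fin n))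
    (hR : LinearMap.det R.toLinearEquiv.toLinearMap = 1)
    (θ₀ : EuclideanSpace ℝ (Fin n)) :
    ∀ T : ℕ,
      (vectorAdamIter n f α β₁ β₂ ε (R θ₀) T).1 =
        R (vectorAdamIter n f α β₁ β₂ ε θ₀ T).1 ∧
      (vectorAdamIter n f α β₁ β₂ ε (R θ₀) T).2.1 =
        R (vectorAdamIter n f α β₁ β₂ ε θ₀ T).2.1 ∧
      (vectorAdamIter n f α β₁ β₂ ε (R θ₀) T).2.2 =
        (vectorAdamIter n f α β₁ β₂ ε θ₀ T).2.2 := by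
  have hgrad := gradient_rot f hf R (hinv R hR)
  intro T
  induction T with
  | zero => refine ⟨rfl, ?_, rfl⟩; simp [vectorAdamIter]
  | succ T ih =>
    obtain ⟨h1, h2, h3⟩ := ih
    simp only [vectorAdamIter, vectorAdamStep, h1, h2, h3, hgrad,
      R.norm_map, map_add, map_smul, map_sub]
    exact ⟨trivial, trivial, trivial⟩
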